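/- Let V be a finite-dimensional complex vector space, let A be a linear endomorphism of V, and let T ∈ Col(A). Then there exists a bijection π of the set of eigenvalues of A onto itself such that T V_λ = V_{π(λ)} for every eigenvalue λ of A, where V_λ denotes the generalized eigenspace of A for λ. -/
import Mathlib

open Submodule

/-- A subspace `M` is invariant under the endomorphism `A`. -/
def InvSub {V : Type*} [AddCommGroup V] [Module ℂ V] (A : V →ₗ[ℂ] V)
    (M : Submodule ℂ V) : Prop :=
  M.map A ≤ M

/-- `T ∈ Col(A)`: `T` is bijective and a subspace is `A`-invariant iff its image
under `T` is `A`-invariant. -/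
def Col {V : Type*} [AddCommGroup V] [Module ℂ V] (A T : V →ₗ[ℂ] V) : Prop :=
  Function.Bijective T ∧ ∀ M : Submodule ℂ V, InvSub A M ↔ InvSub A (M.map T)

/-- The cyclic subspace `(A)_x`, i.e. the span of `{A^n x : n ≥ 0}`. -/
def cyc {V : Type*} [AddCommGroup V] [Module ℂ V] (A : V →ₗ[ℂ] V) (x : V) :
    Submodule ℂ V :=
  Submodule.span ℂ (Set.range fun n : ℕ => (A ^ n) x)

/-- The generalized eigenspace `V_μ = ker((A - μ I)^d)` with `d = dim V`. -/
noncomputable def genEig {V : Type*} [AddCommGroup V] [Module ℂ V] (A : V →ₗ[ℂ] V) (μ : ℂ) :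
    Submodule ℂ V :=
  LinearMap.ker ((A - μ • (1 : V →ₗ[ℂ] V)) ^ (Module.finrank ℂ V))

section Aux

variable {V : Type*} [AddCommGroup V] [Module ℂ V]

lemma invSub_iff {A : V →ₗ[ℂ] V} {M : Submodule ℂ V} :
    InvSub A M ↔ ∀ x ∈ M, A x ∈ M := by
  rw [InvSub, Submodule.map_le_iff_le_comap]
  exact ⟨fun h x hx => h hx, fun h x hx => h x hx⟩

lemma self_mem_cyc (A : V →ₗ[ℂ] V) (x : V) : x ∈ cyc A x :=
  Submodule.subset_span ⟨0, by simp⟩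

lemma pow_mem_cyc (A : V →ₗ[ℂ] V) (x : V) (n : ℕ) : (A ^ n) x ∈ cyc A x :=
  Submodule.subset_span ⟨n, rfl⟩

lemma invSub_cyc (A : V →ₗ[ℂ] V) (x : V) : InvSub A (cyc A x) := by
  rw [InvSub, cyc, Submodule.map_span, Submodule.span_le]
  rintro _ ⟨_, ⟨n, rfl⟩, rfl⟩
  have : A ((A ^ n) x) = (A ^ (n + 1)) x := by
    rw [pow_succ', Module.End.mul_apply]
  rw [SetLike.mem_coe, this]
  exact pow_mem_cyc A x (n + 1)

lemma cyc_le {A : V →ₗ[ℂ] V} {M : Submodule ℂ V} (hM : InvSub A M) {x : V} (hx : x ∈ M) :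
    cyc A x ≤ M := by
  rw [cyc, Submodule.span_le]
  rintro _ ⟨n, rfl⟩
  rw [SetLike.mem_coe]
  induction n with
  | zero => simpa using hx
  | succ n ih =>
    show (A ^ (n + 1)) x ∈ M
    have : (A ^ (n + 1)) x = A ((A ^ n) x) := by rw [pow_succ', Module.End.mul_apply]
    rw [this]
    exact invSub_iff.mp hM _ ih

lemma invSub_inf {A : V →ₗ[ℂ] V} {M₁ M₂ : Submodule ℂ V} (h₁ : InvSub A M₁)
    (h₂ : InvSub A M₂) : InvSub A (M₁ ⊓ M₂) := by
  rw [invSub_iff] at *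
  intro x hx
  exact ⟨h₁ x hx.1, h₂ x hx.2⟩

lemma invSub_sup {A : V →ₗ[ℂ] V} {M₁ M₂ : Submodule ℂ V} (h₁ : InvSub A M₁)
    (h₂ : InvSub A M₂) : InvSub A (M₁ ⊔ M₂) := by
  rw [InvSub, Submodule.map_sup]
  exact sup_le_sup h₁ h₂

lemma invSub_biSup {A : V →ₗ[ℂ] V} {s : Set ℂ} {p : ℂ → Submodule ℂ V}
    (h : ∀ ν, InvSub A (p ν)) : InvSub A (⨆ ν ∈ s, p ν) := by
  rw [InvSub, Submodule.map_iSup]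
  apply iSup_le
  intro ν
  rw [Submodule.map_iSup]
  apply iSup_le
  intro hν
  exact le_trans (h ν) (le_iSup₂ (f := fun ν _ => p ν) ν hν)

lemma invSub_sub_smul {A : V →ₗ[ℂ] V} {μ : ℂ} {M : Submodule ℂ V} :
    InvSub A M ↔ InvSub (A - μ • (1 : V →ₗ[ℂ] V)) M := by
  simp only [invSub_iff]
  constructor
  · intro h x hx
    have : (A - μ • (1 : V →ₗ[ℂ] V)) x = A x - μ • x := by simp
    rw [this]
    exact sub_mem (h x hx) (Submodule.smul_mem _ _ hx)
  · intro h x hx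
    have : A x = (A - μ • (1 : V →ₗ[ℂ] V)) x + μ • x := by simp
    rw [this]
    exact add_mem (h x hx) (Submodule.smul_mem _ _ hx)

lemma cyc_sub_smul (A : V →ₗ[ℂ] V) (μ : ℂ) (x : V) :
    cyc A x = cyc (A - μ • (1 : V →ₗ[ℂ] V)) x := by
  apply le_antisymm
  · exact cyc_le (invSub_sub_smul.mpr (invSub_cyc _ x)) (self_mem_cyc _ x)
  · exact cyc_le (invSub_sub_smul.mp (invSub_cyc A x)) (self_mem_cyc _ x)

lemma col_inv {A T : V →ₗ[ℂ] V} (hT : Col A T) :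
    ∃ T' : V →ₗ[ℂ] V, Col A T' ∧ (∀ x, T' (T x) = x) ∧ (∀ x, T (T' x) = x) := by
  let e := LinearEquiv.ofBijective T hT.1
  have he : ∀ x, e x = T x := fun x => rfl
  refine ⟨e.symm.toLinearMap, ⟨e.symm.bijective, ?_⟩, fun x => ?_, fun x => ?_⟩
  · intro M
    have hmap : M.map e.symm.toLinearMap = M.comap T := by
      ext y
      simp only [Submodule.mem_map, Submodule.mem_comap]
      simp only [LinearEquiv.coe_coe]
      constructor
      · rintro ⟨m, hm, rfl⟩
        have : T (e.symm m) = e (e.symm m) := (he _).symm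
        rw [this, e.apply_symm_apply]
        exact hm
      · intro hy
        exact ⟨T y, hy, by rw [← he, e.symm_apply_apply]⟩
    rw [hmap]
    have := hT.2 (M.comap T)
    rwa [Submodule.map_comap_eq_of_surjective hT.1.2, Iff.comm] at this
  · show e.symm (T x) = x
    rw [← he, e.symm_apply_apply]
  · show T (e.symm x) = x
    rw [← he, e.apply_symm_apply]

lemma map_cyc {A T : V →ₗ[ℂ] V} (hT : Col A T) (x : V) :
    (cyc A x).map T = cyc A (T x) := by
  apply le_antisymm
  · have hco : InvSub A (Submodule.comap T (cyc A (T x))) := by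
      rw [hT.2, Submodule.map_comap_eq_of_surjective hT.1.2]
      exact invSub_cyc A (T x)
    have h1 : cyc A x ≤ Submodule.comap T (cyc A (T x)) :=
      cyc_le hco (by simpa using self_mem_cyc A (T x))
    calc (cyc A x).map T ≤ (Submodule.comap T (cyc A (T x))).map T := Submodule.map_mono h1
    _ = cyc A (T x) := Submodule.map_comap_eq_of_surjective hT.1.2 _
  · exact cyc_le ((hT.2 _).mp (invSub_cyc A x)) (Submodule.mem_map_of_mem (self_mem_cyc A x))

variable [FiniteDimensional ℂ V]

lemma genEig_eq_max (A : V →ₗ[ℂ] V) (μ : ℂ) : genEig A μ = Module.End.maxGenEigenspace A μ := by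
  rw [Module.End.maxGenEigenspace_eq_genEigenspace_finrank, Module.End.genEigenspace_nat]
  rfl

lemma invSub_genEig (A : V →ₗ[ℂ] V) (μ : ℂ) : InvSub A (genEig A μ) := by
  rw [genEig_eq_max, invSub_iff]
  intro x hx
  exact Module.End.mapsTo_maxGenEigenspace_of_comm (Commute.refl A) μ hx

lemma disjoint_genEig {A : V →ₗ[ℂ] V} {μ ν : ℂ} (h : μ ≠ ν) :
    Disjoint (genEig A μ) (genEig A ν) := by
  rw [genEig_eq_max, genEig_eq_max]
  exact Module.End.disjoint_genEigenspace A h ⊤ ⊤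

lemma indep_genEig (A : V →ₗ[ℂ] V) : iSupIndep (fun μ : ℂ => genEig A μ) := by
  have h := Module.End.independent_maxGenEigenspace A
  have : (fun μ : ℂ => genEig A μ) = Module.End.maxGenEigenspace A := funext fun μ => genEig_eq_max A μ
  rwa [this]

lemma hasEig_iff {A : V →ₗ[ℂ] V} {μ : ℂ} :
    Module.End.HasEigenvalue A μ ↔ genEig A μ ≠ ⊥ := by
  have h : genEig A μ = Module.End.genEigenspace A μ (Module.finrank ℂ V : ℕ) :=
    (Module.End.genEigenspace_nat).symm
  constructor
  · intro hμ hbot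
    have h1 : Module.End.genEigenspace A μ 1 ≠ ⊥ := hμ
    apply h1
    rw [← le_bot_iff, ← hbot, h]
    have hnt : Nontrivial V := by
      obtain ⟨v, hv, hv0⟩ := Submodule.exists_mem_ne_zero_of_ne_bot h1
      exact ⟨v, 0, hv0⟩
    refine (Module.End.genEigenspace A μ).monotone ?_
    exact_mod_cast Nat.one_le_cast.mpr Module.finrank_pos
  · intro h2
    refine Module.End.hasEigenvalue_of_hasGenEigenvalue
      (k := Module.finrank ℂ V) ?_
    rw [h] at h2
    exact h2

lemma genEig_inj {A : V →ₗ[ℂ] V} {μ ν : ℂ} (hμ : genEig A μ ≠ ⊥)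
    (h : genEig A μ = genEig A ν) : μ = ν := by
  by_contra hne
  have hd := disjoint_genEig (A := A) hne
  rw [h, disjoint_self] at hd
  exact hμ (h.trans hd)

lemma decomp {A : V →ₗ[ℂ] V} {M : Submodule ℂ V} (hM : InvSub A M)
    {x : V} (hx : x ∈ M) :
    ∃ f : ℂ →₀ V, (∀ μ, f μ ∈ genEig A μ ⊓ M) ∧ (f.sum fun _ v => v) = x := by
  have hfp : ∀ v : V, v ∈ M → A v ∈ M := fun v hv => invSub_iff.mp hM v hv
  set B := LinearMap.restrict A hfp with hB
  have htop : ⨆ μ : ℂ, Module.End.maxGenEigenspace B μ = ⊤ := Module.End.iSup_maxGenEigenspace_eq_top B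
  have hmem : (⟨x, hx⟩ : M) ∈ ⨆ μ : ℂ, Module.End.maxGenEigenspace B μ := htop ▸ Submodule.mem_top
  obtain ⟨g, hg, hgsum⟩ := (Submodule.mem_iSup_iff_exists_finsupp _ _).mp hmem
  refine ⟨g.mapRange (fun v : M => (v : V)) rfl, fun μ => ?_, ?_⟩
  · simp only [Finsupp.mapRange_apply]
    refine Submodule.mem_inf.mpr ⟨?_, (g μ).2⟩
    have h1 := hg μ
    have hres := Module.End.genEigenspace_restrict A M ⊤ μ hfp
    rw [genEig_eq_max]
    have h2 : g μ ∈ Submodule.comap M.subtype (Module.End.genEigenspace A μ ⊤) := hres ▸ h1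
    exact h2
  · rw [Finsupp.sum_mapRange_index (fun _ => rfl)]
    have hcoe : ((g.sum fun _ v => v : M) : V) = g.sum fun _ v => (v : V) := by
      rw [Finsupp.sum, Finsupp.sum]
      exact AddSubmonoidClass.coe_finset_sum _ _
    rw [← hcoe, hgsum]

lemma mem_cyc_iff {N : V →ₗ[ℂ] V} {x v : V} :
    v ∈ cyc N x ↔ ∃ c : ℕ →₀ ℂ, (c.sum fun j a => a • (N ^ j) x) = v :=
  Finsupp.mem_span_range_iff_exists_finsupp

lemma pow_mem_cyc_of_expansion {N : V →ₗ[ℂ] V} {x v : V} {c : ℕ →₀ ℂ} {d : ℕ}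
    (hd : (N ^ d) x = 0) (hv : (c.sum fun j a => a • (N ^ j) x) = v) (hc : c 0 ≠ 0) :
    ∀ n k : ℕ, d ≤ k + n → (N ^ k) x ∈ cyc N v := by
  classical
  intro n
  induction n with
  | zero =>
    intro k hk
    have h0 : (N ^ k) x = 0 := by
      obtain ⟨m, rfl⟩ := Nat.exists_eq_add_of_le hk
      rw [add_comm, pow_add, Module.End.mul_apply, hd, map_zero]
    rw [h0]
    exact zero_mem _
  | succ n ih =>
    intro k hk
    rcases le_or_gt d (k + n) with h | h
    · exact ih k h
    set s := insert 0 c.support with hs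
    have hsum : ∑ j ∈ s, (c j) • (N ^ j) x = v := by
      rw [← hv, Finsupp.sum]
      exact (Finset.sum_subset (Finset.subset_insert _ _) (fun j _ hj => by
        rw [Finsupp.notMem_support_iff.mp hj, zero_smul])).symm
    have happ : ∑ j ∈ s, (c j) • (N ^ (k + j)) x = (N ^ k) v := by
      rw [← hsum, map_sum]
      refine Finset.sum_congr rfl fun j _ => ?_
      rw [map_smul, ← Module.End.mul_apply, ← pow_add]
    have hsplit := Finset.add_sum_erase s (fun j => (c j) • (N ^ (k + j)) x)
      (Finset.mem_insert_self 0 _)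
    have hmem : ∑ j ∈ s.erase 0, (c j) • (N ^ (k + j)) x ∈ cyc N v := by
      refine Submodule.sum_mem _ fun j hj => Submodule.smul_mem _ _ ?_
      have hj1 : 1 ≤ j := Nat.one_le_iff_ne_zero.mpr (Finset.ne_of_mem_erase hj)
      exact ih (k + j) (by omega)
    have hc0mem : (c 0) • (N ^ k) x ∈ cyc N v := by
      have heq : (c 0) • (N ^ (k + 0)) x
          = (N ^ k) v - ∑ j ∈ s.erase 0, (c j) • (N ^ (k + j)) x := by
        rw [← happ, ← hsplit]
        abel
      have : (c 0) • (N ^ k) x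
          = (N ^ k) v - ∑ j ∈ s.erase 0, (c j) • (N ^ (k + j)) x := heq
      rw [this]
      exact sub_mem (pow_mem_cyc N v k) hmem
    have := Submodule.smul_mem (cyc N v) (c 0)⁻¹ hc0mem
    rwa [inv_smul_smul₀ hc] at this

lemma key1 {N : V →ₗ[ℂ] V} {x : V} {d : ℕ} (hd : (N ^ d) x = 0)
    {M : Submodule ℂ V} (hM : InvSub N M) (hMx : M ≤ cyc N x) (hxM : x ∉ M) :
    M ≤ cyc N (N x) := by
  intro v hv
  by_contra hvn
  obtain ⟨c, hc⟩ := mem_cyc_iff.mp (hMx hv)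
  have hc0 : c 0 ≠ 0 := by
    intro h0
    apply hvn
    rw [← hc, Finsupp.sum]
    refine Submodule.sum_mem _ fun j hj => Submodule.smul_mem _ _ ?_
    have hj0 : j ≠ 0 := by
      intro hj0
      rw [hj0] at hj
      exact Finsupp.mem_support_iff.mp hj h0
    obtain ⟨i, rfl⟩ := Nat.exists_eq_succ_of_ne_zero hj0
    have : (N ^ (i + 1)) x = (N ^ i) (N x) := by
      rw [pow_succ, Module.End.mul_apply]
    rw [this]
    exact pow_mem_cyc N (N x) i
  have hx_in : x ∈ cyc N v := by
    have := pow_mem_cyc_of_expansion hd hc hc0 d 0 (by omega)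
    simpa using this
  exact hxM ((cyc_le hM hv) hx_in)

lemma notMem_cyc_apply {N : V →ₗ[ℂ] V} {x : V} {d : ℕ} (hd : (N ^ d) x = 0) (hx : x ≠ 0) :
    x ∉ cyc N (N x) := by
  classical
  intro hmem
  have hex : ∃ m, (N ^ m) x = 0 := ⟨d, hd⟩
  obtain ⟨m, hm0, hmin⟩ : ∃ m, (N ^ m) x = 0 ∧ ∀ k < m, (N ^ k) x ≠ 0 :=
    ⟨Nat.find hex, Nat.find_spec hex, fun k hk => Nat.find_min hex hk⟩
  have hmpos : 0 < m := by
    rcases Nat.eq_zero_or_pos m with h | h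
    · exfalso
      apply hx
      have := hm0
      rw [h, pow_zero] at this
      simpa using this
    · exact h
  have hlt : (N ^ (m - 1)) x ≠ 0 := hmin (m - 1) (Nat.sub_lt hmpos Nat.one_pos)
  obtain ⟨c, hc⟩ := mem_cyc_iff.mp hmem
  apply hlt
  calc (N ^ (m - 1)) x
      = (N ^ (m - 1)) (c.sum fun j a => a • (N ^ j) (N x)) := by rw [hc]
    _ = ∑ j ∈ c.support, (c j) • (N ^ (m - 1)) ((N ^ j) (N x)) := by
        rw [Finsupp.sum, map_sum]
        exact Finset.sum_congr rfl fun j _ => by rw [map_smul]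
    _ = 0 := by
        refine Finset.sum_eq_zero fun j _ => ?_
        have h1 : (N ^ j) (N x) = (N ^ (j + 1)) x := by
          rw [pow_succ, Module.End.mul_apply]
        have h2 : (N ^ (m - 1)) ((N ^ (j + 1)) x) = (N ^ (j + m)) x := by
          have he : m - 1 + (j + 1) = j + m := by omega
          rw [← Module.End.mul_apply, ← pow_add, he]
        rw [h1, h2, pow_add, Module.End.mul_apply, hm0, map_zero, smul_zero]

/-- The lattice-theoretic property: `cyc A x` is not the join of two strictly
smaller invariant subspaces. -/
def Chainy (A : V →ₗ[ℂ] V) (x : V) : Prop :=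
  ∀ M₁ M₂ : Submodule ℂ V, InvSub A M₁ → InvSub A M₂ →
    M₁ < cyc A x → M₂ < cyc A x → M₁ ⊔ M₂ ≠ cyc A x

lemma good_to_chainy {A : V →ₗ[ℂ] V} {lam : ℂ} {x : V}
    (hx : x ∈ genEig A lam) : Chainy A x := by
  intro M₁ M₂ h₁ h₂ hl₁ hl₂ hsup
  by_cases hx0 : x = 0
  · have hbot : cyc A x = ⊥ := by
      rw [← le_bot_iff, cyc, Submodule.span_le]
      rintro _ ⟨n, rfl⟩
      simp [hx0]
    rw [hbot] at hl₁
    exact not_lt_bot hl₁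
  set N := A - lam • (1 : V →ₗ[ℂ] V) with hN
  have hd : (N ^ (Module.finrank ℂ V)) x = 0 := hx
  have hcycN : cyc A x = cyc N x := cyc_sub_smul A lam x
  have hxM₁ : x ∉ M₁ := fun h => hl₁.ne (le_antisymm hl₁.le (cyc_le h₁ h))
  have hxM₂ : x ∉ M₂ := fun h => hl₂.ne (le_antisymm hl₂.le (cyc_le h₂ h))
  have hk₁ : M₁ ≤ cyc N (N x) :=
    key1 hd (invSub_sub_smul.mp h₁) (hcycN ▸ hl₁.le) hxM₁
  have hk₂ : M₂ ≤ cyc N (N x) :=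
    key1 hd (invSub_sub_smul.mp h₂) (hcycN ▸ hl₂.le) hxM₂
  have : x ∈ cyc N (N x) := by
    have hx' : x ∈ M₁ ⊔ M₂ := hsup ▸ self_mem_cyc A x
    exact sup_le hk₁ hk₂ hx'
  exact notMem_cyc_apply hd hx0 this

lemma chainy_to_good {A : V →ₗ[ℂ] V} {x : V} (hx0 : x ≠ 0) (hch : Chainy A x) :
    ∃ lam : ℂ, x ∈ genEig A lam := by
  by_contra hng
  push_neg at hng
  obtain ⟨f, hf, hfsum⟩ := decomp (invSub_cyc A x) (self_mem_cyc A x)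
  have hne : f.support.Nonempty := by
    by_contra h
    rw [Finset.not_nonempty_iff_eq_empty, Finsupp.support_eq_empty] at h
    apply hx0
    rw [← hfsum, h, Finsupp.sum_zero_index]
  obtain ⟨lam, hlam⟩ := hne
  have hflam : f lam ≠ 0 := Finsupp.mem_support_iff.mp hlam
  set M₁ := genEig A lam ⊓ cyc A x with hM₁
  set M₂ := (⨆ ν ∈ {ν : ℂ | ν ≠ lam}, genEig A ν) ⊓ cyc A x with hM₂
  have hM₁inv : InvSub A M₁ := invSub_inf (invSub_genEig A lam) (invSub_cyc A x)
  have hM₂inv : InvSub A M₂ :=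
    invSub_inf (invSub_biSup fun ν => invSub_genEig A ν) (invSub_cyc A x)
  have hM₁le : M₁ ≤ cyc A x := inf_le_right
  have hM₂le : M₂ ≤ cyc A x := inf_le_right
  have hdiff : x - f lam ∈ ⨆ ν ∈ {ν : ℂ | ν ≠ lam}, genEig A ν := by
    have hstep : x - f lam = ∑ ν ∈ f.support.erase lam, f ν := by
      rw [← hfsum, Finsupp.sum, ← Finset.add_sum_erase _ _ hlam, add_sub_cancel_left]
    rw [hstep]
    refine Submodule.sum_mem _ fun ν hν => ?_
    exact Submodule.mem_iSup_of_mem ν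
      (Submodule.mem_iSup_of_mem (Finset.ne_of_mem_erase hν) ((hf ν).1))
  have hdis := (indep_genEig A).disjoint_biSup (x := lam) (y := {ν : ℂ | ν ≠ lam})
    (by simp)
  have hxM₁ : x ∉ M₁ := fun h => hng lam h.1
  have hxM₂ : x ∉ M₂ := by
    intro hx2
    have h2 : f lam ∈ ⨆ ν ∈ {ν : ℂ | ν ≠ lam}, genEig A ν := by
      have : f lam = x - (x - f lam) := by abel
      rw [this]
      exact sub_mem hx2.1 hdiff
    have : f lam ∈ (⊥ : Submodule ℂ V) :=
      hdis.le_bot (Submodule.mem_inf.mpr ⟨(hf lam).1, h2⟩)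
    exact hflam (Submodule.mem_bot ℂ |>.mp this)
  have hsup : M₁ ⊔ M₂ = cyc A x := by
    apply le_antisymm (sup_le hM₁le hM₂le)
    apply cyc_le (invSub_sup hM₁inv hM₂inv)
    have hx1 : f lam ∈ M₁ := Submodule.mem_inf.mpr ⟨(hf lam).1, (hf lam).2⟩
    have hx2 : x - f lam ∈ M₂ :=
      Submodule.mem_inf.mpr ⟨hdiff, sub_mem (self_mem_cyc A x) (hf lam).2⟩
    have : x = f lam + (x - f lam) := by abel
    rw [this]
    exact Submodule.add_mem _ (Submodule.mem_sup_left hx1) (Submodule.mem_sup_right hx2)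
  refine hch M₁ M₂ hM₁inv hM₂inv ?_ ?_ hsup
  · exact lt_of_le_of_ne hM₁le fun h => hxM₁ (h ▸ self_mem_cyc A x)
  · exact lt_of_le_of_ne hM₂le fun h => hxM₂ (h ▸ self_mem_cyc A x)

omit [FiniteDimensional ℂ V] in
lemma chainy_map {A T : V →ₗ[ℂ] V} (hT : Col A T) {x : V}
    (h : Chainy A (T x)) : Chainy A x := by
  intro M₁ M₂ h₁ h₂ hl₁ hl₂ hsup
  have hmaplt : ∀ M : Submodule ℂ V, M < cyc A x → M.map T < cyc A (T x) := by
    intro M hM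
    rw [← map_cyc hT]
    refine lt_of_le_of_ne (Submodule.map_mono hM.le) fun he => ?_
    exact hM.ne (Submodule.map_injective_of_injective hT.1.1 he)
  refine h (M₁.map T) (M₂.map T) ((hT.2 M₁).mp h₁) ((hT.2 M₂).mp h₂)
    (hmaplt M₁ hl₁) (hmaplt M₂ hl₂) ?_
  rw [← Submodule.map_sup, hsup, map_cyc hT]

lemma good_map {A T : V →ₗ[ℂ] V} (hT : Col A T) {x : V} (hx0 : x ≠ 0)
    (h : ∃ lam, x ∈ genEig A lam) : ∃ mu, T x ∈ genEig A mu := by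
  obtain ⟨lam, hlam⟩ := h
  obtain ⟨T', hT', h1, _⟩ := col_inv hT
  have hch : Chainy A x := good_to_chainy hlam
  have hch2 : Chainy A (T' (T x)) := by rwa [h1]
  have hch3 : Chainy A (T x) := chainy_map hT' hch2
  have hTx0 : T x ≠ 0 := fun he => hx0 (by rw [← h1 x, he, map_zero])
  exact chainy_to_good hTx0 hch3

lemma mapsTo_genEig {A T : V →ₗ[ℂ] V} (hT : Col A T)
    {lam mu : ℂ} {x : V} (hx : x ∈ genEig A lam) (hx0 : x ≠ 0)
    (hTx : T x ∈ genEig A mu) : (genEig A lam).map T ≤ genEig A mu := by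
  rintro _ ⟨y, hy, rfl⟩
  by_cases hy0 : y = 0
  · rw [hy0, map_zero]
    exact zero_mem _
  by_cases hz0 : x + y = 0
  · have : y = -x := by
      rw [← neg_eq_of_add_eq_zero_right hz0]
    rw [this, map_neg]
    exact neg_mem hTx
  obtain ⟨ν, hν⟩ := good_map hT hy0 ⟨lam, hy⟩
  obtain ⟨ρ, hρ⟩ := good_map hT hz0 ⟨lam, add_mem hx hy⟩
  by_cases hνμ : ν = mu
  · exact hνμ ▸ hν
  by_cases hρμ : ρ = mu
  · have : T y = T (x + y) - T x := by rw [map_add]; abel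
    rw [this]
    exact sub_mem (hρμ ▸ hρ) hTx
  · exfalso
    have h1 : T x ∈ ⨆ σ ∈ {σ : ℂ | σ ≠ mu}, genEig A σ := by
      have he : T x = T (x + y) - T y := by rw [map_add]; abel
      rw [he]
      exact sub_mem
        (Submodule.mem_iSup_of_mem ρ (Submodule.mem_iSup_of_mem hρμ hρ))
        (Submodule.mem_iSup_of_mem ν (Submodule.mem_iSup_of_mem hνμ hν))
    have hdis := (indep_genEig A).disjoint_biSup (x := mu) (y := {σ : ℂ | σ ≠ mu})
      (by simp)
    have hzero : T x = 0 := by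
      have := hdis.le_bot (Submodule.mem_inf.mpr ⟨hTx, h1⟩)
      exact Submodule.mem_bot ℂ |>.mp this
    exact hx0 (hT.1.1 (by rw [hzero, map_zero]))

lemma core {A T : V →ₗ[ℂ] V} (hT : Col A T) {lam : ℂ}
    (hlam : Module.End.HasEigenvalue A lam) :
    ∃ mu : ℂ, (genEig A lam).map T = genEig A mu ∧ Module.End.HasEigenvalue A mu := by
  have hne : genEig A lam ≠ ⊥ := hasEig_iff.mp hlam
  obtain ⟨x, hx, hx0⟩ := Submodule.exists_mem_ne_zero_of_ne_bot hne
  obtain ⟨mu, hmu⟩ := good_map hT hx0 ⟨lam, hx⟩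
  obtain ⟨T', hT', h1, h2⟩ := col_inv hT
  have hTx0 : T x ≠ 0 := fun he => hx0 (by rw [← h1 x, he, map_zero])
  have hle : (genEig A lam).map T ≤ genEig A mu := mapsTo_genEig hT hx hx0 hmu
  have hge' : (genEig A mu).map T' ≤ genEig A lam :=
    mapsTo_genEig hT' hmu hTx0 (by rwa [h1 x])
  have hTT' : T ∘ₗ T' = LinearMap.id := LinearMap.ext h2
  have hge : genEig A mu ≤ (genEig A lam).map T := by
    have hmap := Submodule.map_mono (f := T) hge'
    rwa [← Submodule.map_comp, hTT', Submodule.map_id] at hmap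
  refine ⟨mu, le_antisymm hle hge, hasEig_iff.mpr fun hb => ?_⟩
  rw [hb] at hmu
  exact hTx0 (Submodule.mem_bot ℂ |>.mp hmu)

end Aux

theorem stmt7 {V : Type*} [AddCommGroup V] [Module ℂ V] [FiniteDimensional ℂ V]
    (A T : V →ₗ[ℂ] V) (hT : Col A T) :
    ∃ π : ℂ → ℂ,
      Set.BijOn π {lam | Module.End.HasEigenvalue A lam} {lam | Module.End.HasEigenvalue A lam} ∧
      ∀ lam : ℂ, Module.End.HasEigenvalue A lam →
        (genEig A lam).map T = genEig A (π lam) := by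
  classical
  have hcore : ∀ lam : ℂ, Module.End.HasEigenvalue A lam →
      ∃ mu, (genEig A lam).map T = genEig A mu ∧ Module.End.HasEigenvalue A mu :=
    fun lam h => core hT h
  choose! π hπ1 hπ2 using hcore
  refine ⟨π, ⟨fun lam h => hπ2 lam h, fun l₁ h₁ l₂ h₂ he => ?_, fun mu hmu => ?_⟩,
    fun lam h => hπ1 lam h⟩
  · -- injectivity on eigenvalues
    have e1 := hπ1 l₁ h₁
    have e2 := hπ1 l₂ h₂
    have : (genEig A l₁).map T = (genEig A l₂).map T := by
      rw [e1, e2, he]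
    have hgeq : genEig A l₁ = genEig A l₂ :=
      Submodule.map_injective_of_injective hT.1.1 this
    exact genEig_inj (hasEig_iff.mp h₁) hgeq
  · -- surjectivity
    obtain ⟨T', hT', h1, h2⟩ := col_inv hT
    obtain ⟨lam, hl1, hl2⟩ := core hT' hmu
    have hTT' : T ∘ₗ T' = LinearMap.id := LinearMap.ext h2
    have hmap : (genEig A lam).map T = genEig A mu := by
      rw [← hl1, ← Submodule.map_comp, hTT', Submodule.map_id]
    have hval : genEig A (π lam) = genEig A mu := by
      rw [← hπ1 lam hl2, hmap]
    have : π lam = mu := genEig_inj (hasEig_iff.mp (hπ2 lam hl2)) hval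
    exact ⟨lam, hl2, this⟩
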